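/- arXiv:2205.07788 — 3 statements merged into one kernel-verified Lean document; each statement's English description precedes it below -/
import Mathlib

section
/- Let v : Fin 5 → ℙ(K^4) satisfy π(v)(I) = min(|I|, 3) for every I ⊆ Fin 5. Then there exist scalars p_0, p_1, p_2 ∈ K with p_0 p_1 p_2 (p_0 − p_1)(p_1 − p_2)(p_2 − p_0) ≠ 0 and a linear automorphism g of K^4 such that v_0 = g[e_0], v_1 = g[e_1], v_2 = g[e_2], v_3 = g[e_0 + e_1 + e_2], and v_4 = g[p_0 e_0 + p_1 e_1 + p_2 e_2]. -/
open scoped LinearAlgebra.Projectivization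

/-- The subspace of `Fin n → K` spanned by the lines `v i` for `i ∈ I`. -/
noncomputable def spanV {K : Type*} [Field K] {n m : ℕ}
    (v : Fin m → ℙ K (Fin n → K)) (I : Finset (Fin m)) : Submodule K (Fin n → K) :=
  ⨆ i ∈ I, (v i).submodule

/-- The rank matrix of a tuple of points in projective space. -/
noncomputable def rankMatrix {K : Type*} [Field K] {n m : ℕ}
    (v : Fin m → ℙ K (Fin n → K)) (I : Finset (Fin m)) : ℕ :=
  Module.finrank K (spanV v I)

lemma ne_zero_of_apply_ne_zero {K : Type*} [Field K] {n : ℕ} {u : Fin n → K} {i : Fin n}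
    (h : u i ≠ 0) : u ≠ 0 := fun h0 => h (by rw [h0]; rfl)

lemma spanV_eq {K : Type*} [Field K] {n m : ℕ} (v : Fin m → ℙ K (Fin n → K))
    (I : Finset (Fin m)) :
    spanV v I = Submodule.span K ((fun i => (v i).rep) '' I) := by
  rw [spanV]
  simp only [Projectivization.submodule_eq]
  rw [← Submodule.span_iUnion₂]
  congr 1
  ext x
  simp only [Set.mem_iUnion, Set.mem_singleton_iff, Set.mem_image, Finset.mem_coe]
  tauto

lemma helper0 {K V : Type*} [Field K] [AddCommGroup V] [Module K V] {x y z t : V} {a b c : K}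
    (hind : LinearIndependent K ![y, z, t]) (ht : a • x + b • y + c • z = t) (ha : a = 0) :
    False := by
  have h2 := Fintype.linearIndependent_iff.mp hind ![b, c, -1] ?_ 2
  · norm_num [Matrix.cons_val_two, Matrix.tail_cons, Matrix.head_cons] at h2
  · rw [Fin.sum_univ_three]
    simp only [Matrix.cons_val_zero, Matrix.cons_val_one, Matrix.head_cons,
      Matrix.cons_val_two, Matrix.tail_cons]
    rw [← ht, ha]
    module

lemma helperD {K V : Type*} [Field K] [AddCommGroup V] [Module K V] {x y z t s : V}
    {a b c q0 q1 q2 : K}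
    (hind : LinearIndependent K ![z, t, s]) (ht : a • x + b • y + c • z = t)
    (hs : q0 • x + q1 • y + q2 • z = s) (ha : a ≠ 0) (heq : q0 * b = q1 * a) : False := by
  have h2 := Fintype.linearIndependent_iff.mp hind ![q2 - (q0 / a) * c, q0 / a, -1] ?_ 2
  · norm_num [Matrix.cons_val_two, Matrix.tail_cons, Matrix.head_cons] at h2
  · rw [Fin.sum_univ_three]
    simp only [Matrix.cons_val_zero, Matrix.cons_val_one, Matrix.head_cons,
      Matrix.cons_val_two, Matrix.tail_cons]
    rw [← ht, ← hs]
    match_scalars <;> field_simp <;> grind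

/-- a quintuple with rank matrix `I ↦ min |I| 3` is, up to `GL_4`, of the form
`(g[e₀], g[e₁], g[e₂], g[e₀+e₁+e₂], g[p₀e₀+p₁e₁+p₂e₂])` with `p` generic. -/
theorem rank_5_10_normal_form (K : Type*) [Field K] [IsAlgClosed K] [CharZero K]
    (v : Fin 5 → ℙ K (Fin 4 → K))
    (h : ∀ I : Finset (Fin 5), rankMatrix v I = min I.card 3) :
    ∃ p₀ p₁ p₂ : K, ∃ hp : p₀ * p₁ * p₂ * (p₀ - p₁) * (p₁ - p₂) * (p₂ - p₀) ≠ 0,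
      ∃ g : (Fin 4 → K) ≃ₗ[K] (Fin 4 → K),
        v 0 = Projectivization.mk K (g ![1,0,0,0])
            (g.map_ne_zero_iff.mpr (ne_zero_of_apply_ne_zero (i := 0) (by norm_num))) ∧
        v 1 = Projectivization.mk K (g ![0,1,0,0])
            (g.map_ne_zero_iff.mpr (ne_zero_of_apply_ne_zero (i := 1) (by norm_num))) ∧
        v 2 = Projectivization.mk K (g ![0,0,1,0])
            (g.map_ne_zero_iff.mpr (ne_zero_of_apply_ne_zero (i := 2) (by first | exact one_ne_zero | (show (1 : K) ≠ 0; exact one_ne_zero) | (simp; done) | (norm_num; done)))) ∧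
        v 3 = Projectivization.mk K (g ![1,1,1,0])
            (g.map_ne_zero_iff.mpr (ne_zero_of_apply_ne_zero (i := 0) (by norm_num))) ∧
        v 4 = Projectivization.mk K (g ![p₀,p₁,p₂,0])
            (g.map_ne_zero_iff.mpr (ne_zero_of_apply_ne_zero (i := 0) (by
              simpa using left_ne_zero_of_mul (left_ne_zero_of_mul (left_ne_zero_of_mul
                (left_ne_zero_of_mul (left_ne_zero_of_mul hp))))))) := by
  set u : Fin 5 → (Fin 4 → K) := fun i => (v i).rep with hu
  -- linear independence of triples
  have hindep : ∀ i j k : Fin 5, ({i, j, k} : Finset (Fin 5)).card = 3 →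
      LinearIndependent K ![u i, u j, u k] := by
    intro i j k hcard
    rw [linearIndependent_iff_card_eq_finrank_span]
    have hr : Set.range ![u i, u j, u k] = (fun i => (v i).rep) '' ({i, j, k} : Finset (Fin 5)) := by
      ext x
      simp only [Set.mem_range, Finset.coe_insert, Finset.coe_singleton, Set.image_insert_eq,
        Set.image_singleton, Set.mem_insert_iff, Set.mem_singleton_iff]
      constructor
      · rintro ⟨l, rfl⟩
        fin_cases l <;> simp [hu]
      · rintro (rfl | rfl | rfl)
        exacts [⟨0, rfl⟩, ⟨1, rfl⟩, ⟨2, rfl⟩]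
    rw [Set.finrank, hr, ← spanV_eq]
    have := h {i, j, k}
    rw [rankMatrix] at this
    rw [this, hcard]
    simp
  -- membership facts
  have hle : ∀ I J : Finset (Fin 5), I ⊆ J → spanV v I ≤ spanV v J := by
    intro I J hIJ
    exact iSup_le fun i => iSup_le fun hi => le_iSup₂ (f := fun i _ => (v i).submodule) i (hIJ hi)
  have hmem3 : u 3 ∈ spanV v {0, 1, 2} := by
    have he : spanV v {0, 1, 2} = spanV v {0, 1, 2, 3} := by
      apply Submodule.eq_of_le_of_finrank_eq (hle _ _ (by decide))
      show rankMatrix v _ = rankMatrix v _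
      rw [h, h]; decide
    rw [he]
    have : u 3 ∈ (v 3).submodule := by
      rw [Projectivization.submodule_eq]; exact Submodule.mem_span_singleton_self _
    exact (le_iSup₂ (f := fun i (_ : i ∈ ({0,1,2,3} : Finset (Fin 5))) => (v i).submodule) 3
      (by decide)) this
  have hmem4 : u 4 ∈ spanV v {0, 1, 2} := by
    have he : spanV v {0, 1, 2} = spanV v {0, 1, 2, 4} := by
      apply Submodule.eq_of_le_of_finrank_eq (hle _ _ (by decide))
      show rankMatrix v _ = rankMatrix v _
      rw [h, h]; decide
    rw [he]
    have : u 4 ∈ (v 4).submodule := by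
      rw [Projectivization.submodule_eq]; exact Submodule.mem_span_singleton_self _
    exact (le_iSup₂ (f := fun i (_ : i ∈ ({0,1,2,4} : Finset (Fin 5))) => (v i).submodule) 4
      (by decide)) this
  have hspan012 : spanV v {0, 1, 2} = Submodule.span K (Set.range ![u 0, u 1, u 2]) := by
    rw [spanV_eq]
    congr 1
    ext x
    simp only [Finset.coe_insert, Finset.coe_singleton, Set.image_insert_eq, Set.image_singleton]
    constructor
    · rintro (rfl | rfl | rfl)
      exacts [⟨0, rfl⟩, ⟨1, rfl⟩, ⟨2, rfl⟩]
    · rintro ⟨l, rfl⟩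
      fin_cases l <;> simp [hu]
  rw [hspan012, Submodule.mem_span_range_iff_exists_fun] at hmem3 hmem4
  obtain ⟨c, hc0⟩ := hmem3
  obtain ⟨q, hq0'⟩ := hmem4
  have hc : c 0 • u 0 + c 1 • u 1 + c 2 • u 2 = u 3 := by
    rw [← hc0, Fin.sum_univ_three]
    simp
  have hq : q 0 • u 0 + q 1 • u 1 + q 2 • u 2 = u 4 := by
    rw [← hq0', Fin.sum_univ_three]
    simp
  set a := c 0; set b := c 1; set cc := c 2
  set q0 := q 0; set q1 := q 1; set q2 := q 2
  -- nonzeroness of c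
  have ha : a ≠ 0 := fun h0 => helper0 (hindep 1 2 3 (by decide)) hc h0
  have hb : b ≠ 0 := fun h0 => helper0 (hindep 0 2 3 (by decide))
    (by rw [← hc]; module : b • u 1 + a • u 0 + cc • u 2 = u 3) h0
  have hcc : cc ≠ 0 := fun h0 => helper0 (hindep 0 1 3 (by decide))
    (by rw [← hc]; module : cc • u 2 + a • u 0 + b • u 1 = u 3) h0
  have hq0 : q0 ≠ 0 := fun h0 => helper0 (hindep 1 2 4 (by decide)) hq h0
  have hq1 : q1 ≠ 0 := fun h0 => helper0 (hindep 0 2 4 (by decide))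
    (by rw [← hq]; module : q1 • u 1 + q0 • u 0 + q2 • u 2 = u 4) h0
  have hq2 : q2 ≠ 0 := fun h0 => helper0 (hindep 0 1 4 (by decide))
    (by rw [← hq]; module : q2 • u 2 + q0 • u 0 + q1 • u 1 = u 4) h0
  refine ⟨q0 / a, q1 / b, q2 / cc, ?_, ?_⟩
  · have h01 : q0 / a - q1 / b ≠ 0 := by
      intro h0
      rw [sub_eq_zero, div_eq_div_iff ha hb] at h0
      exact helperD (hindep 2 3 4 (by decide)) hc hq ha h0
    have h12 : q1 / b - q2 / cc ≠ 0 := by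
      intro h0
      rw [sub_eq_zero, div_eq_div_iff hb hcc] at h0
      exact helperD (hindep 0 3 4 (by decide))
        (by rw [← hc]; module : b • u 1 + cc • u 2 + a • u 0 = u 3)
        (by rw [← hq]; module : q1 • u 1 + q2 • u 2 + q0 • u 0 = u 4) hb h0
    have h20 : q2 / cc - q0 / a ≠ 0 := by
      intro h0
      rw [sub_eq_zero, div_eq_div_iff hcc ha] at h0
      exact helperD (hindep 1 3 4 (by decide))
        (by rw [← hc]; module : cc • u 2 + a • u 0 + b • u 1 = u 3)
        (by rw [← hq]; module : q2 • u 2 + q0 • u 0 + q1 • u 1 = u 4) hcc h0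
    have hp0 : q0 / a ≠ 0 := div_ne_zero hq0 ha
    have hp1 : q1 / b ≠ 0 := div_ne_zero hq1 hb
    have hp2 : q2 / cc ≠ 0 := div_ne_zero hq2 hcc
    exact mul_ne_zero (mul_ne_zero (mul_ne_zero (mul_ne_zero (mul_ne_zero hp0 hp1) hp2) h01) h12) h20
  · have hu012 := hindep 0 1 2 (by decide)
    rw [Fintype.linearIndependent_iff] at hu012
    have hw : LinearIndependent K ![a • u 0, b • u 1, cc • u 2] := by
      rw [Fintype.linearIndependent_iff]
      intro g0 hg i
      rw [Fin.sum_univ_three] at hg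
      simp only [Matrix.cons_val_zero, Matrix.cons_val_one, Matrix.head_cons,
        Matrix.cons_val_two, Matrix.tail_cons] at hg
      have key := hu012 ![g0 0 * a, g0 1 * b, g0 2 * cc] (by
        rw [Fin.sum_univ_three]
        simp only [Matrix.cons_val_zero, Matrix.cons_val_one, Matrix.head_cons,
          Matrix.cons_val_two, Matrix.tail_cons]
        rw [← hg]; module)
      fin_cases i
      · have := key 0
        simp only [Matrix.cons_val_zero] at this
        exact (mul_eq_zero.mp this).resolve_right ha
      · have := key 1
        simp only [Matrix.cons_val_one, Matrix.head_cons] at this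
        exact (mul_eq_zero.mp this).resolve_right hb
      · have := key 2
        simp only [Matrix.cons_val_two, Matrix.tail_cons, Matrix.head_cons] at this
        exact (mul_eq_zero.mp this).resolve_right hcc
    have hne : Submodule.span K (Set.range ![a • u 0, b • u 1, cc • u 2]) ≠ ⊤ := by
      intro htop
      have hfr := linearIndependent_iff_card_eq_finrank_span.mp hw
      rw [Set.finrank, htop, finrank_top] at hfr
      simp [Module.finrank_pi] at hfr
    have hex : ∃ x, x ∉ Submodule.span K (Set.range ![a • u 0, b • u 1, cc • u 2]) := by
      by_contra hcon
      push_neg at hcon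
      exact hne (Submodule.eq_top_iff'.mpr hcon)
    obtain ⟨x, hx⟩ := hex
    have hsnoc : LinearIndependent K ![a • u 0, b • u 1, cc • u 2, x] := by
      have heqs : ![a • u 0, b • u 1, cc • u 2, x] = Fin.snoc ![a • u 0, b • u 1, cc • u 2] x := by
        funext i
        fin_cases i <;> rfl
      rw [heqs, linearIndependent_fin_snoc]
      exact ⟨hw, hx⟩
    have hcard4 : Fintype.card (Fin 4) = Module.finrank K (Fin 4 → K) := by
      simp [Module.finrank_pi]
    set B := basisOfLinearIndependentOfCardEqFinrank hsnoc hcard4 with hB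
    set g := (Pi.basisFun K (Fin 4)).equiv B (Equiv.refl _) with hgdef
    have hgi : ∀ i : Fin 4, g ((Pi.basisFun K (Fin 4)) i) = ![a • u 0, b • u 1, cc • u 2, x] i := by
      intro i
      rw [hgdef, Module.Basis.equiv_apply, Equiv.refl_apply, hB,
        coe_basisOfLinearIndependentOfCardEqFinrank]
    have he0 : (![1,0,0,0] : Fin 4 → K) = Pi.basisFun K (Fin 4) 0 := by
      funext j; fin_cases j <;> simp [Pi.basisFun_apply]
    have he1 : (![0,1,0,0] : Fin 4 → K) = Pi.basisFun K (Fin 4) 1 := by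
      funext j; fin_cases j <;> simp [Pi.basisFun_apply]
    have he2 : (![0,0,1,0] : Fin 4 → K) = Pi.basisFun K (Fin 4) 2 := by
      funext j; fin_cases j <;> simp [Pi.basisFun_apply]
    have hg0 : g ![1,0,0,0] = a • u 0 := by rw [he0, hgi 0]; rfl
    have hg1 : g ![0,1,0,0] = b • u 1 := by rw [he1, hgi 1]; rfl
    have hg2 : g ![0,0,1,0] = cc • u 2 := by rw [he2, hgi 2]; rfl
    have hg3 : g ![1,1,1,0] = u 3 := by
      have hsum : (![1,1,1,0] : Fin 4 → K) = ![1,0,0,0] + ![0,1,0,0] + ![0,0,1,0] := by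
        funext j; fin_cases j <;> norm_num
      rw [hsum, map_add, map_add, hg0, hg1, hg2, hc]
    have hg4 : g ![q0 / a, q1 / b, q2 / cc, 0] = u 4 := by
      have hsum : (![q0 / a, q1 / b, q2 / cc, 0] : Fin 4 → K)
          = (q0 / a) • ![1,0,0,0] + (q1 / b) • ![0,1,0,0] + (q2 / cc) • ![0,0,1,0] := by
        funext j; fin_cases j <;> simp
      rw [hsum, map_add, map_add, map_smul, map_smul, map_smul, hg0, hg1, hg2,
        smul_smul, smul_smul, smul_smul, div_mul_cancel₀ _ ha, div_mul_cancel₀ _ hb,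
        div_mul_cancel₀ _ hcc, hq]
    refine ⟨g, ?_, ?_, ?_, ?_, ?_⟩
    · rw [← Projectivization.mk_rep (v 0)]
      exact (Projectivization.mk_eq_mk_iff K _ _ _ _).mpr ⟨Units.mk0 a⁻¹ (inv_ne_zero ha),
        by rw [hg0, Units.smul_def, Units.val_mk0, smul_smul, inv_mul_cancel₀ ha, one_smul]⟩
    · rw [← Projectivization.mk_rep (v 1)]
      exact (Projectivization.mk_eq_mk_iff K _ _ _ _).mpr ⟨Units.mk0 b⁻¹ (inv_ne_zero hb),
        by rw [hg1, Units.smul_def, Units.val_mk0, smul_smul, inv_mul_cancel₀ hb, one_smul]⟩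
    · rw [← Projectivization.mk_rep (v 2)]
      exact (Projectivization.mk_eq_mk_iff K _ _ _ _).mpr ⟨Units.mk0 cc⁻¹ (inv_ne_zero hcc),
        by rw [hg2, Units.smul_def, Units.val_mk0, smul_smul, inv_mul_cancel₀ hcc, one_smul]⟩
    · rw [← Projectivization.mk_rep (v 3)]
      exact (Projectivization.mk_eq_mk_iff K _ _ _ _).mpr ⟨1, by rw [hg3]; simp [hu]⟩
    · rw [← Projectivization.mk_rep (v 4)]
      exact (Projectivization.mk_eq_mk_iff K _ _ _ _).mpr ⟨1, by rw [hg4]; simp [hu]⟩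
end

section
/- Let v : Fin 5 → ℙ(K^4) satisfy π(v)(I) = min(|I|, 2) for every I ⊆ Fin 5 with {3,4} ⊄ I, and π(v)(I) = min(|I| − 1, 2) for every I ⊆ Fin 5 with {3,4} ⊆ I. Then there exist scalars p_0, p_1 ∈ K with p_0 p_1 (p_0 − p_1) ≠ 0 and a linear automorphism g of K^4 such that v_0 = g[e_0], v_1 = g[e_1], v_2 = g[e_0 + e_1], v_3 = g[p_0 e_0 + p_1 e_1], and v_4 = g[p_0 e_0 + p_1 e_1]. -/
open scoped LinearAlgebra.Projectivization

section Aux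

variable {K : Type*} [Field K] {n m : ℕ}

lemma spanV_pair' (v : Fin m → ℙ K (Fin n → K)) (i j : Fin m) :
    spanV v {i, j} = (v i).submodule ⊔ (v j).submodule := by
  simp [spanV, iSup_or, iSup_sup_eq]

lemma spanV_mono' (v : Fin m → ℙ K (Fin n → K)) {I J : Finset (Fin m)} (h : I ⊆ J) :
    spanV v I ≤ spanV v J := biSup_mono h

lemma submodule_le_spanV' (v : Fin m → ℙ K (Fin n → K)) {I : Finset (Fin m)} {i : Fin m}
    (h : i ∈ I) : (v i).submodule ≤ spanV v I :=
  le_biSup (fun i => (v i).submodule) h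

lemma rankMatrix_pair_eq_one' (v : Fin m → ℙ K (Fin n → K)) (i j : Fin m)
    (h : (v j).submodule ≤ (v i).submodule) : rankMatrix v {i, j} = 1 := by
  rw [rankMatrix, spanV_pair', sup_eq_left.mpr h, Projectivization.submodule_eq,
    finrank_span_singleton (Projectivization.rep_nonzero _)]

lemma not_mem_of_rank_pair' (v : Fin m → ℙ K (Fin n → K)) (i j : Fin m)
    (h : rankMatrix v {i, j} = 2) (hm : (v j).rep ∈ (K ∙ (v i).rep)) : False := by
  have hle : (v j).submodule ≤ (v i).submodule := by
    rw [Projectivization.submodule_eq, Projectivization.submodule_eq]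
    exact (Submodule.span_singleton_le_iff_mem _ _).mpr hm
  rw [rankMatrix_pair_eq_one' v i j hle] at h
  omega

/-- Extend a linearly independent pair in `K^4` to a linear automorphism. -/
lemma exists_autom_of_pair {K : Type*} [Field K] (w0 w1 : Fin 4 → K)
    (hind : LinearIndependent K ![w0, w1]) :
    ∃ g : (Fin 4 → K) ≃ₗ[K] (Fin 4 → K), g ![1,0,0,0] = w0 ∧ g ![0,1,0,0] = w1 := by
  classical
  set W : Submodule K (Fin 4 → K) := Submodule.span K (Set.range ![w0, w1]) with hW
  obtain ⟨W', hc⟩ := Submodule.exists_isCompl W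
  have hrW : Module.finrank K W = 2 := by
    rw [hW, finrank_span_eq_card hind, Fintype.card_fin]
  have hrW' : Module.finrank K W' = 2 := by
    have := Submodule.finrank_add_eq_of_isCompl hc
    have h4 : Module.finrank K (Fin 4 → K) = 4 := by simp
    omega
  set c : Module.Basis (Fin 2) K W' := Module.finBasisOfFinrankEq K W' hrW' with hcdef
  set t : (Fin 2 ⊕ Fin 2) → (Fin 4 → K) :=
    Sum.elim ![w0, w1] (fun i => (c i : Fin 4 → K)) with ht
  have hti : LinearIndependent K t := by
    apply LinearIndependent.sum_type hind
      ((c.linearIndependent).map' W'.subtype W'.ker_subtype)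
    · rw [← hW]
      refine Disjoint.mono_right ?_ hc.disjoint
      rw [Submodule.span_le]
      rintro x ⟨i, rfl⟩; exact (c i).2
  have hcard : Fintype.card (Fin 2 ⊕ Fin 2) = Module.finrank K (Fin 4 → K) := by simp
  set B := basisOfLinearIndependentOfCardEqFinrank hti hcard with hB
  refine ⟨(Pi.basisFun K (Fin 4)).equiv (B.reindex finSumFinEquiv) (Equiv.refl _), ?_, ?_⟩
  · have h0 : (![1,0,0,0] : Fin 4 → K) = Pi.basisFun K (Fin 4) 0 := by
      funext i; fin_cases i <;> simp
    rw [h0, Module.Basis.equiv_apply, Equiv.refl_apply, Module.Basis.reindex_apply]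
    have he : (finSumFinEquiv (m := 2) (n := 2)).symm 0 = Sum.inl 0 := by decide
    rw [he, hB, coe_basisOfLinearIndependentOfCardEqFinrank]
    simp [ht]
  · have h0 : (![0,1,0,0] : Fin 4 → K) = Pi.basisFun K (Fin 4) 1 := by
      funext i; fin_cases i <;> simp
    rw [h0, Module.Basis.equiv_apply, Equiv.refl_apply, Module.Basis.reindex_apply]
    have he : (finSumFinEquiv (m := 2) (n := 2)).symm 1 = Sum.inl 1 := by decide
    rw [he, hB, coe_basisOfLinearIndependentOfCardEqFinrank]
    simp [ht]

end Aux

/-- normal form for quintuples of rank type (4) with the identified pair {3,4}. -/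
theorem rank_4_normal_form (K : Type*) [Field K] [IsAlgClosed K] [CharZero K]
    (v : Fin 5 → ℙ K (Fin 4 → K))
    (h₁ : ∀ I : Finset (Fin 5), ¬ ({3, 4} : Finset (Fin 5)) ⊆ I →
      rankMatrix v I = min I.card 2)
    (h₂ : ∀ I : Finset (Fin 5), ({3, 4} : Finset (Fin 5)) ⊆ I →
      rankMatrix v I = min (I.card - 1) 2) :
    ∃ p₀ p₁ : K, ∃ hp : p₀ * p₁ * (p₀ - p₁) ≠ 0,
      ∃ g : (Fin 4 → K) ≃ₗ[K] (Fin 4 → K),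
        v 0 = Projectivization.mk K (g ![1,0,0,0])
            (g.map_ne_zero_iff.mpr (ne_zero_of_apply_ne_zero (i := 0) (by norm_num))) ∧
        v 1 = Projectivization.mk K (g ![0,1,0,0])
            (g.map_ne_zero_iff.mpr (ne_zero_of_apply_ne_zero (i := 1) (by norm_num))) ∧
        v 2 = Projectivization.mk K (g ![1,1,0,0])
            (g.map_ne_zero_iff.mpr (ne_zero_of_apply_ne_zero (i := 0) (by norm_num))) ∧
        v 3 = Projectivization.mk K (g ![p₀,p₁,0,0])
            (g.map_ne_zero_iff.mpr (ne_zero_of_apply_ne_zero (i := 0) (by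
              simpa using left_ne_zero_of_mul (left_ne_zero_of_mul hp)))) ∧
        v 4 = Projectivization.mk K (g ![p₀,p₁,0,0])
            (g.map_ne_zero_iff.mpr (ne_zero_of_apply_ne_zero (i := 0) (by
              simpa using left_ne_zero_of_mul (left_ne_zero_of_mul hp)))) := by
  classical
  set u : Fin 5 → (Fin 4 → K) := fun i => (v i).rep with hu
  have hu0 : ∀ i, u i ≠ 0 := fun i => Projectivization.rep_nonzero _
  -- rank values
  have r01 : rankMatrix v {0, 1} = 2 := by simpa using h₁ {0, 1} (by decide)
  have r12 : rankMatrix v {1, 2} = 2 := by simpa using h₁ {1, 2} (by decide)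
  have r02 : rankMatrix v {0, 2} = 2 := by simpa using h₁ {0, 2} (by decide)
  have r13 : rankMatrix v {1, 3} = 2 := by simpa using h₁ {1, 3} (by decide)
  have r03 : rankMatrix v {0, 3} = 2 := by simpa using h₁ {0, 3} (by decide)
  have r23 : rankMatrix v {2, 3} = 2 := by simpa using h₁ {2, 3} (by decide)
  have r34 : rankMatrix v {3, 4} = 1 := by simpa using h₂ {3, 4} (by decide)
  have r012 : rankMatrix v {0, 1, 2} = 2 := by simpa using h₁ {0, 1, 2} (by decide)
  have r013 : rankMatrix v {0, 1, 3} = 2 := by simpa using h₁ {0, 1, 3} (by decide)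
  -- v 3 = v 4
  have h34 : v 3 = v 4 := by
    apply Projectivization.submodule_injective
    have e3 : (v 3).submodule = spanV v {3, 4} := by
      apply Submodule.eq_of_le_of_finrank_eq
      · rw [spanV_pair']; exact le_sup_left
      · rw [Projectivization.submodule_eq,
          finrank_span_singleton (Projectivization.rep_nonzero _)]
        exact r34.symm
    have e4 : (v 4).submodule = spanV v {3, 4} := by
      apply Submodule.eq_of_le_of_finrank_eq
      · rw [spanV_pair']; exact le_sup_right
      · rw [Projectivization.submodule_eq,
          finrank_span_singleton (Projectivization.rep_nonzero _)]
        exact r34.symm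
    rw [e3, e4]
  -- u 0, u 1 independent
  have hne01 : v 0 ≠ v 1 := by
    intro he
    have := rankMatrix_pair_eq_one' v 0 1 (by rw [he])
    omega
  have hind : LinearIndependent K ![u 0, u 1] := by
    have h := (Projectivization.independent_pair_iff_ne (v 0) (v 1)).mpr hne01
    rw [Projectivization.independent_iff] at h
    convert h using 1
    funext i
    fin_cases i <;> rfl
    rfl
  -- span of {0,1}
  have hspan01 : spanV v {0, 1} = Submodule.span K {u 0, u 1} := by
    rw [spanV_pair', Projectivization.submodule_eq, Projectivization.submodule_eq,
      Submodule.span_insert, hu]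
  -- membership of u 2 and u 3 in span {u 0, u 1}
  have key : ∀ k : Fin 5, rankMatrix v {0, 1, k} = 2 → u k ∈ Submodule.span K {u 0, u 1} := by
    intro k hk
    have hle : spanV v {0, 1} ≤ spanV v {0, 1, k} := by
      apply spanV_mono'
      intro x hx
      simp only [Finset.mem_insert, Finset.mem_singleton] at hx ⊢
      tauto
    have heq : spanV v {0, 1} = spanV v {0, 1, k} :=
      Submodule.eq_of_le_of_finrank_eq hle (by rw [rankMatrix] at r01 hk; rw [r01, hk])
    have hmem : u k ∈ spanV v {0, 1, k} := by
      apply submodule_le_spanV' v (show k ∈ ({0, 1, k} : Finset (Fin 5)) by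
        simp)
      rw [Projectivization.submodule_eq, hu]
      exact Submodule.mem_span_singleton_self _
    rw [← heq, hspan01] at hmem
    exact hmem
  obtain ⟨a, b, hab⟩ := Submodule.mem_span_pair.mp (key 2 r012)
  obtain ⟨c, d, hcd⟩ := Submodule.mem_span_pair.mp (key 3 r013)
  -- nonvanishing of the coefficients
  have ha : a ≠ 0 := by
    intro h0
    apply not_mem_of_rank_pair' v 1 2 r12
    refine Submodule.mem_span_singleton.mpr ⟨b, ?_⟩
    show b • u 1 = u 2
    rw [← hab, h0, zero_smul, zero_add]
  have hb : b ≠ 0 := by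
    intro h0
    apply not_mem_of_rank_pair' v 0 2 r02
    refine Submodule.mem_span_singleton.mpr ⟨a, ?_⟩
    show a • u 0 = u 2
    rw [← hab, h0, zero_smul, add_zero]
  have hc : c ≠ 0 := by
    intro h0
    apply not_mem_of_rank_pair' v 1 3 r13
    refine Submodule.mem_span_singleton.mpr ⟨d, ?_⟩
    show d • u 1 = u 3
    rw [← hcd, h0, zero_smul, zero_add]
  have hd : d ≠ 0 := by
    intro h0
    apply not_mem_of_rank_pair' v 0 3 r03
    refine Submodule.mem_span_singleton.mpr ⟨c, ?_⟩
    show c • u 0 = u 3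
    rw [← hcd, h0, zero_smul, add_zero]
  -- normalized coefficients
  set p₀ : K := c / a with hp₀
  set p₁ : K := d / b with hp₁
  have hp₀0 : p₀ ≠ 0 := div_ne_zero hc ha
  have hp₁0 : p₁ ≠ 0 := div_ne_zero hd hb
  have hpne : p₀ ≠ p₁ := by
    intro he
    apply not_mem_of_rank_pair' v 2 3 r23
    refine Submodule.mem_span_singleton.mpr ⟨p₀, ?_⟩
    show p₀ • u 2 = u 3
    rw [← hab, ← hcd, smul_add, smul_smul, smul_smul]
    congr 1
    · congr 1
      rw [hp₀]
      exact div_mul_cancel₀ _ ha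
    · congr 1
      rw [he, hp₁]
      exact div_mul_cancel₀ _ hb
  have hp : p₀ * p₁ * (p₀ - p₁) ≠ 0 :=
    mul_ne_zero (mul_ne_zero hp₀0 hp₁0) (sub_ne_zero.mpr hpne)
  -- scaled basis vectors
  set w0 : Fin 4 → K := a • u 0 with hw0
  set w1 : Fin 4 → K := b • u 1 with hw1
  have hindw : LinearIndependent K ![w0, w1] := by
    have h := hind.units_smul ![Units.mk0 a ha, Units.mk0 b hb]
    convert h using 1
    funext i
    fin_cases i <;> simp [hw0, hw1, Units.smul_def]
  obtain ⟨g, hg0, hg1⟩ := exists_autom_of_pair w0 w1 hindw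
  refine ⟨p₀, p₁, hp, g, ?_, ?_, ?_, ?_, ?_⟩
  · rw [← (v 0).mk_rep]
    refine ((Projectivization.mk_eq_mk_iff K _ _ _ _).mpr ⟨(Units.mk0 a ha)⁻¹, ?_⟩)
    rw [hg0, hw0]
    show a⁻¹ • a • u 0 = (v 0).rep
    rw [smul_smul, inv_mul_cancel₀ ha, one_smul]
  · rw [← (v 1).mk_rep]
    refine ((Projectivization.mk_eq_mk_iff K _ _ _ _).mpr ⟨(Units.mk0 b hb)⁻¹, ?_⟩)
    rw [hg1, hw1]
    show b⁻¹ • b • u 1 = (v 1).rep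
    rw [smul_smul, inv_mul_cancel₀ hb, one_smul]
  · rw [← (v 2).mk_rep]
    refine ((Projectivization.mk_eq_mk_iff K _ _ _ _).mpr ⟨1, ?_⟩)
    have hsum : (![1,1,0,0] : Fin 4 → K) = ![1,0,0,0] + ![0,1,0,0] := by
      funext i; fin_cases i <;> norm_num
    rw [one_smul, hsum, map_add, hg0, hg1, hab]
  · rw [← (v 3).mk_rep]
    refine ((Projectivization.mk_eq_mk_iff K _ _ _ _).mpr ⟨1, ?_⟩)
    have hsum : (![p₀,p₁,0,0] : Fin 4 → K) = p₀ • ![1,0,0,0] + p₁ • ![0,1,0,0] := by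
      funext i; fin_cases i <;> simp
    rw [one_smul, hsum, map_add, map_smul, map_smul, hg0, hg1, hw0, hw1, smul_smul, smul_smul,
      hp₀, hp₁, div_mul_cancel₀ _ ha, div_mul_cancel₀ _ hb, hcd]
  · rw [← h34, ← (v 3).mk_rep]
    refine ((Projectivization.mk_eq_mk_iff K _ _ _ _).mpr ⟨1, ?_⟩)
    have hsum : (![p₀,p₁,0,0] : Fin 4 → K) = p₀ • ![1,0,0,0] + p₁ • ![0,1,0,0] := by
      funext i; fin_cases i <;> simp
    rw [one_smul, hsum, map_add, map_smul, map_smul, hg0, hg1, hw0, hw1, smul_smul, smul_smul,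
      hp₀, hp₁, div_mul_cancel₀ _ ha, div_mul_cancel₀ _ hb, hcd]
end

section
/- Let p_0, p_1, q_0, q_1 ∈ K with p_0 p_1 (p_0 − p_1) ≠ 0, q_0 q_1 (q_0 − q_1) ≠ 0, and p_0 q_1 − p_1 q_0 ≠ 0, and let w : Fin 5 → (Fin 2 → K) with w_i ≠ 0 for every i. Then the five quantities q_0(p_1 − p_0)·d(1,3)·d(4,2) + p_0(q_1 − q_0)·d(1,4)·d(2,3), q_1(p_1 − p_0)·d(0,3)·d(4,2) + p_1(q_1 − q_0)·d(0,4)·d(2,3), p_0 q_1 · d(0,3)·d(4,1) + p_1 q_0 · d(0,4)·d(1,3), q_1 · d(0,2)·d(4,1) + q_0 · d(0,4)·d(1,2), and p_1 · d(0,2)·d(3,1) + p_0 · d(0,3)·d(1,2) all vanish if and only if either (a) there exist a linear automorphism g of K^2 and nonzero scalars c_0, …, c_4 ∈ K with w_0 = c_0 · g(e_0), w_1 = c_1 · g(e_1), w_2 = c_2 · g(e_0 + e_1), w_3 = c_3 · g(p_0 e_0 + p_1 e_1), w_4 = c_4 · g(q_0 e_0 + q_1 e_1), or (b) there exist four distinct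 indices i, j, k, l such that d(a,b) = 0 for every pair of distinct indices a, b taken from {i, j, k, l}. -/
/-- The 2×2 determinant of the columns `w i` and `w j`. -/
def d2 {K : Type*} [Field K] {m : ℕ} (w : Fin m → Fin 2 → K) (i j : Fin m) : K :=
  w i 0 * w j 1 - w i 1 * w j 0

section Aux
variable {K : Type*} [Field K] {m : ℕ}

lemma d2_swap (w : Fin m → Fin 2 → K) (i j : Fin m) : d2 w j i = - d2 w i j := by
  simp [d2]; ring

lemma dz_symm {w : Fin m → Fin 2 → K} {i j : Fin m} (h : d2 w i j = 0) : d2 w j i = 0 := by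
  rw [d2_swap, h, neg_zero]

lemma d2_trans {w : Fin m → Fin 2 → K} {i j k : Fin m} (hwi : w i ≠ 0)
    (hij : d2 w i j = 0) (hik : d2 w i k = 0) : d2 w j k = 0 := by
  have h0 : w i 0 ≠ 0 ∨ w i 1 ≠ 0 := by
    by_contra h
    push_neg at h
    exact hwi (funext fun t => by fin_cases t <;> simp [h.1, h.2])
  unfold d2 at *
  rcases h0 with h0 | h0
  · have key : w i 0 * (w j 0 * w k 1 - w j 1 * w k 0) = 0 := by
      linear_combination (w j 0) * hik - (w k 0) * hij
    rcases mul_eq_zero.mp key with h | h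
    · exact absurd h h0
    · exact h
  · have key : w i 1 * (w j 0 * w k 1 - w j 1 * w k 0) = 0 := by
      linear_combination (w j 1) * hik - (w k 1) * hij
    rcases mul_eq_zero.mp key with h | h
    · exact absurd h h0
    · exact h

lemma pluck (w : Fin m → Fin 2 → K) (i j k l : Fin m) :
    d2 w i j * d2 w k l - d2 w i k * d2 w j l + d2 w i l * d2 w j k = 0 := by
  simp [d2]; ring

end Aux


section Cases
variable {K : Type*} [Field K] {m : ℕ} {w : Fin m → Fin 2 → K} {A B : K} {a b c d : Fin m}

lemma caseAB (hB : B ≠ 0)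
    (heq : A * d2 w a b * d2 w c d + B * d2 w a c * d2 w d b = 0)
    (h : d2 w a b = 0) (hwb : w b ≠ 0) : d2 w a c = 0 ∨ d2 w a d = 0 := by
  have key : d2 w a c * d2 w d b = 0 := by
    have h2 : B * (d2 w a c * d2 w d b) = 0 := by linear_combination heq - d2 w c d * A * h
    exact (mul_eq_zero.mp h2).resolve_left hB
  rcases mul_eq_zero.mp key with h2 | h2
  · exact Or.inl h2
  · exact Or.inr (d2_trans hwb (dz_symm h) (dz_symm h2))

lemma caseCD (hB : B ≠ 0)
    (heq : A * d2 w a b * d2 w c d + B * d2 w a c * d2 w d b = 0)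
    (h : d2 w c d = 0) (hwd : w d ≠ 0) : d2 w c a = 0 ∨ d2 w c b = 0 := by
  have key : d2 w a c * d2 w d b = 0 := by
    have h2 : B * (d2 w a c * d2 w d b) = 0 := by linear_combination heq - A * d2 w a b * h
    exact (mul_eq_zero.mp h2).resolve_left hB
  rcases mul_eq_zero.mp key with h2 | h2
  · exact Or.inl (dz_symm h2)
  · exact Or.inr (d2_trans hwd (dz_symm h) h2)

lemma caseAC (hA : A ≠ 0)
    (heq : A * d2 w a b * d2 w c d + B * d2 w a c * d2 w d b = 0)
    (h : d2 w a c = 0) (hwc : w c ≠ 0) : d2 w a b = 0 ∨ d2 w a d = 0 := by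
  have key : d2 w a b * d2 w c d = 0 := by
    have h2 : A * (d2 w a b * d2 w c d) = 0 := by linear_combination heq - B * d2 w d b * h
    exact (mul_eq_zero.mp h2).resolve_left hA
  rcases mul_eq_zero.mp key with h2 | h2
  · exact Or.inl h2
  · exact Or.inr (d2_trans hwc (dz_symm h) h2)

lemma caseDB (hA : A ≠ 0)
    (heq : A * d2 w a b * d2 w c d + B * d2 w a c * d2 w d b = 0)
    (h : d2 w d b = 0) (hwd : w d ≠ 0) : d2 w b a = 0 ∨ d2 w b c = 0 := by
  have key : d2 w a b * d2 w c d = 0 := by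
    have h2 : A * (d2 w a b * d2 w c d) = 0 := by linear_combination heq - B * d2 w a c * h
    exact (mul_eq_zero.mp h2).resolve_left hA
  rcases mul_eq_zero.mp key with h2 | h2
  · exact Or.inl (dz_symm h2)
  · exact Or.inr (dz_symm (d2_trans hwd (dz_symm h2) h))

lemma caseAD (hAB : A - B ≠ 0)
    (heq : A * d2 w a b * d2 w c d + B * d2 w a c * d2 w d b = 0)
    (h : d2 w a d = 0) (hwd : w d ≠ 0) : d2 w a b = 0 ∨ d2 w a c = 0 := by
  have key : (B - A) * (d2 w a c * d2 w d b) = 0 := by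
    have hsw : d2 w d b + d2 w b d = 0 := by rw [d2_swap w b d]; ring
    linear_combination heq - A * (pluck w a b c d) + (A * d2 w b c) * h -
      (A * d2 w a c) * hsw
  have hBA : B - A ≠ 0 := fun hh => hAB (by linear_combination -hh)
  rcases mul_eq_zero.mp ((mul_eq_zero.mp key).resolve_left hBA) with h2 | h2
  · exact Or.inr h2
  · exact Or.inl (d2_trans hwd (dz_symm h) h2)

lemma caseBC (hAB : A - B ≠ 0)
    (heq : A * d2 w a b * d2 w c d + B * d2 w a c * d2 w d b = 0)
    (h : d2 w b c = 0) (hwc : w c ≠ 0) : d2 w b a = 0 ∨ d2 w b d = 0 := by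
  have key : (B - A) * (d2 w a c * d2 w d b) = 0 := by
    have hsw : d2 w d b + d2 w b d = 0 := by rw [d2_swap w b d]; ring
    linear_combination heq - A * (pluck w a b c d) + (A * d2 w a d) * h -
      (A * d2 w a c) * hsw
  have hBA : B - A ≠ 0 := fun hh => hAB (by linear_combination -hh)
  rcases mul_eq_zero.mp ((mul_eq_zero.mp key).resolve_left hBA) with h2 | h2
  · exact Or.inl (d2_trans hwc (dz_symm h) (dz_symm h2))
  · exact Or.inr (dz_symm h2)

end Cases
section Four
variable {K : Type*} [Field K]

lemma mkFour (w : Fin 5 → Fin 2 → K) (hw : ∀ i, w i ≠ 0) (i j x y : Fin 5)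
    (hij : i ≠ j) (hix : i ≠ x) (hiy : i ≠ y) (hjx : j ≠ x) (hjy : j ≠ y) (hxy : x ≠ y)
    (h1 : d2 w i j = 0) (h2 : d2 w i x = 0) (h3 : d2 w i y = 0) :
    ∃ i' j' k' l' : Fin 5, i' ≠ j' ∧ i' ≠ k' ∧ i' ≠ l' ∧ j' ≠ k' ∧ j' ≠ l' ∧ k' ≠ l' ∧
      ∀ a b : Fin 5, a ∈ ({i', j', k', l'} : Finset (Fin 5)) →
        b ∈ ({i', j', k', l'} : Finset (Fin 5)) → a ≠ b → d2 w a b = 0 := by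
  have hjx' : d2 w j x = 0 := d2_trans (hw i) h1 h2
  have hjy' : d2 w j y = 0 := d2_trans (hw i) h1 h3
  have hxy' : d2 w x y = 0 := d2_trans (hw i) h2 h3
  refine ⟨i, j, x, y, hij, hix, hiy, hjx, hjy, hxy, ?_⟩
  intro a b ha hb hab
  simp only [Finset.mem_insert, Finset.mem_singleton] at ha hb
  rcases ha with rfl | rfl | rfl | rfl <;> rcases hb with rfl | rfl | rfl | rfl <;>
    first
      | exact absurd rfl hab
      | assumption
      | exact dz_symm ‹_›

lemma combine (w : Fin 5 → Fin 2 → K) (hw : ∀ i, w i ≠ 0) (i j m n p : Fin 5)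
    (hij : i ≠ j) (him : i ≠ m) (hin : i ≠ n) (hip : i ≠ p)
    (hjm : j ≠ m) (hjn : j ≠ n) (hjp : j ≠ p)
    (hmn : m ≠ n) (hmp : m ≠ p) (hnp : n ≠ p)
    (hz : d2 w i j = 0)
    (D1 : d2 w i m = 0 ∨ d2 w i n = 0)
    (D2 : d2 w i m = 0 ∨ d2 w i p = 0)
    (D3 : d2 w i n = 0 ∨ d2 w i p = 0) :
    ∃ i' j' k' l' : Fin 5, i' ≠ j' ∧ i' ≠ k' ∧ i' ≠ l' ∧ j' ≠ k' ∧ j' ≠ l' ∧ k' ≠ l' ∧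
      ∀ a b : Fin 5, a ∈ ({i', j', k', l'} : Finset (Fin 5)) →
        b ∈ ({i', j', k', l'} : Finset (Fin 5)) → a ≠ b → d2 w a b = 0 := by
  rcases D3 with h3 | h3
  · rcases D2 with h2 | h2
    · exact mkFour w hw i j m n hij him hin hjm hjn hmn hz h2 h3
    · exact mkFour w hw i j n p hij hin hip hjn hjp hnp hz h3 h2
  · rcases D1 with h1 | h1
    · exact mkFour w hw i j m p hij him hip hjm hjp hmp hz h1 h3
    · exact mkFour w hw i j n p hij hin hip hjn hjp hnp hz h1 h3

lemma identity3 (w : Fin 5 → Fin 2 → K) (i j k : Fin 5) (t : Fin 2) :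
    d2 w j k * w i t + d2 w k i * w j t + d2 w i j * w k t = 0 := by
  fin_cases t <;> · show _ * w _ _ + _ * w _ _ + _ * w _ _ = 0; simp [d2]; ring

end Four

/-- the simultaneous vanishing of the five listed polynomials characterises the
closure of the orbit of `(e₀, e₁, e₀+e₁, p₀e₀+p₁e₁, q₀e₀+q₁e₁)`. -/
theorem vanishing_iff_rank_5 (K : Type*) [Field K] [IsAlgClosed K] [CharZero K]
    (p₀ p₁ q₀ q₁ : K)
    (hp : p₀ * p₁ * (p₀ - p₁) ≠ 0) (hq : q₀ * q₁ * (q₀ - q₁) ≠ 0)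
    (hpq : p₀ * q₁ - p₁ * q₀ ≠ 0)
    (w : Fin 5 → Fin 2 → K) (hw : ∀ i, w i ≠ 0) :
    (q₀ * (p₁ - p₀) * d2 w 1 3 * d2 w 4 2 + p₀ * (q₁ - q₀) * d2 w 1 4 * d2 w 2 3 = 0 ∧
     q₁ * (p₁ - p₀) * d2 w 0 3 * d2 w 4 2 + p₁ * (q₁ - q₀) * d2 w 0 4 * d2 w 2 3 = 0 ∧
     p₀ * q₁ * d2 w 0 3 * d2 w 4 1 + p₁ * q₀ * d2 w 0 4 * d2 w 1 3 = 0 ∧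
     q₁ * d2 w 0 2 * d2 w 4 1 + q₀ * d2 w 0 4 * d2 w 1 2 = 0 ∧
     p₁ * d2 w 0 2 * d2 w 3 1 + p₀ * d2 w 0 3 * d2 w 1 2 = 0) ↔
      ((∃ g : (Fin 2 → K) ≃ₗ[K] (Fin 2 → K), ∃ c₀ c₁ c₂ c₃ c₄ : K,
          c₀ ≠ 0 ∧ c₁ ≠ 0 ∧ c₂ ≠ 0 ∧ c₃ ≠ 0 ∧ c₄ ≠ 0 ∧
          w 0 = c₀ • g ![1, 0] ∧ w 1 = c₁ • g ![0, 1] ∧ w 2 = c₂ • g ![1, 1] ∧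
          w 3 = c₃ • g ![p₀, p₁] ∧ w 4 = c₄ • g ![q₀, q₁]) ∨
       (∃ i j k l : Fin 5, i ≠ j ∧ i ≠ k ∧ i ≠ l ∧ j ≠ k ∧ j ≠ l ∧ k ≠ l ∧
          ∀ a b : Fin 5, a ∈ ({i, j, k, l} : Finset (Fin 5)) →
            b ∈ ({i, j, k, l} : Finset (Fin 5)) → a ≠ b → d2 w a b = 0)) := by
  
  obtain ⟨hpp, hpd⟩ := mul_ne_zero_iff.mp hp
  obtain ⟨hp0, hp1⟩ := mul_ne_zero_iff.mp hpp
  obtain ⟨hqq, hqd⟩ := mul_ne_zero_iff.mp hq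
  obtain ⟨hq0, hq1⟩ := mul_ne_zero_iff.mp hqq
  have hpd' : p₁ - p₀ ≠ 0 := fun h => hpd (by linear_combination -h)
  have hqd' : q₁ - q₀ ≠ 0 := fun h => hqd (by linear_combination -h)
  constructor
  · rintro ⟨e1, e2, e3, e4, e5⟩
    have E1 : (q₀ * (p₁ - p₀)) * d2 w 1 3 * d2 w 4 2 +
        (p₀ * (q₁ - q₀)) * d2 w 1 4 * d2 w 2 3 = 0 := by linear_combination e1
    have E2 : (q₁ * (p₁ - p₀)) * d2 w 0 3 * d2 w 4 2 +
        (p₁ * (q₁ - q₀)) * d2 w 0 4 * d2 w 2 3 = 0 := by linear_combination e2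
    have E3 : (p₀ * q₁) * d2 w 0 3 * d2 w 4 1 +
        (p₁ * q₀) * d2 w 0 4 * d2 w 1 3 = 0 := by linear_combination e3
    have hA1 : q₀ * (p₁ - p₀) ≠ 0 := mul_ne_zero hq0 hpd'
    have hB1 : p₀ * (q₁ - q₀) ≠ 0 := mul_ne_zero hp0 hqd'
    have hAB1 : q₀ * (p₁ - p₀) - p₀ * (q₁ - q₀) ≠ 0 := fun h => hpq (by linear_combination -h)
    have hA2 : q₁ * (p₁ - p₀) ≠ 0 := mul_ne_zero hq1 hpd'
    have hB2 : p₁ * (q₁ - q₀) ≠ 0 := mul_ne_zero hp1 hqd'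
    have hAB2 : q₁ * (p₁ - p₀) - p₁ * (q₁ - q₀) ≠ 0 := fun h => hpq (by linear_combination -h)
    have hA3 : p₀ * q₁ ≠ 0 := mul_ne_zero hp0 hq1
    have hB3 : p₁ * q₀ ≠ 0 := mul_ne_zero hp1 hq0
    have hAB3 : p₀ * q₁ - p₁ * q₀ ≠ 0 := hpq
    have hAB4 : q₁ - q₀ ≠ 0 := hqd'
    have hAB5 : p₁ - p₀ ≠ 0 := hpd'
    by_cases hnd : ∀ i j : Fin 5, i ≠ j → d2 w i j ≠ 0
    · -- nondegenerate: construct the linear automorphism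
      left
      have nd01 : d2 w 0 1 ≠ 0 := hnd 0 1 (by decide)
      have nd21 : d2 w 2 1 ≠ 0 := hnd 2 1 (by decide)
      have nd02 : d2 w 0 2 ≠ 0 := hnd 0 2 (by decide)
      have nd31 : d2 w 3 1 ≠ 0 := hnd 3 1 (by decide)
      have nd41 : d2 w 4 1 ≠ 0 := hnd 4 1 (by decide)
      set M : Matrix (Fin 2) (Fin 2) K :=
        !![d2 w 2 1 * w 0 0, d2 w 0 2 * w 1 0; d2 w 2 1 * w 0 1, d2 w 0 2 * w 1 1] with hM
      have hdet : M.det = d2 w 2 1 * d2 w 0 2 * d2 w 0 1 := by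
        rw [hM, Matrix.det_fin_two_of]; simp only [d2]; ring
      have hdet' : M.det ≠ 0 := by
        rw [hdet]; exact mul_ne_zero (mul_ne_zero nd21 nd02) nd01
      have hinv : Invertible M := M.invertibleOfIsUnitDet hdet'.isUnit
      have gapp : ∀ v : Fin 2 → K, (M.toLinearEquiv' hinv) v = M.mulVec v := fun v => rfl
      have hmv : ∀ (x y : K) (t : Fin 2),
          M.mulVec ![x, y] t = x * (d2 w 2 1 * w 0 t) + y * (d2 w 0 2 * w 1 t) := by
        intro x y t
        fin_cases t <;>
          simp [hM, Matrix.mulVec, dotProduct, Fin.sum_univ_two] <;> ring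
      refine ⟨M.toLinearEquiv' hinv, (d2 w 2 1)⁻¹, (d2 w 0 2)⁻¹, (d2 w 0 1)⁻¹,
        d2 w 3 1 / (d2 w 0 1 * (p₀ * d2 w 2 1)), d2 w 4 1 / (d2 w 0 1 * (q₀ * d2 w 2 1)),
        inv_ne_zero nd21, inv_ne_zero nd02, inv_ne_zero nd01,
        div_ne_zero nd31 (mul_ne_zero nd01 (mul_ne_zero hp0 nd21)),
        div_ne_zero nd41 (mul_ne_zero nd01 (mul_ne_zero hq0 nd21)), ?_, ?_, ?_, ?_, ?_⟩
      · funext t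
        rw [Pi.smul_apply, smul_eq_mul, gapp, hmv]
        field_simp
        ring
      · funext t
        rw [Pi.smul_apply, smul_eq_mul, gapp, hmv]
        field_simp
        ring
      · funext t
        rw [Pi.smul_apply, smul_eq_mul, gapp, hmv, eq_comm, inv_mul_eq_iff_eq_mul₀ nd01]
        fin_cases t <;> · simp only [d2, Fin.zero_eta, Fin.mk_one]; ring
      · funext t
        rw [Pi.smul_apply, smul_eq_mul, gapp, hmv, div_mul_eq_mul_div,
          eq_div_iff (mul_ne_zero nd01 (mul_ne_zero hp0 nd21))]
        fin_cases t
        · simp only [d2, Fin.zero_eta, Fin.mk_one] at e5 ⊢; linear_combination (-(w 1 0)) * e5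
        · simp only [d2, Fin.zero_eta, Fin.mk_one] at e5 ⊢; linear_combination (-(w 1 1)) * e5
      · funext t
        rw [Pi.smul_apply, smul_eq_mul, gapp, hmv, div_mul_eq_mul_div,
          eq_div_iff (mul_ne_zero nd01 (mul_ne_zero hq0 nd21))]
        fin_cases t
        · simp only [d2, Fin.zero_eta, Fin.mk_one] at e4 ⊢; linear_combination (-(w 1 0)) * e4
        · simp only [d2, Fin.zero_eta, Fin.mk_one] at e4 ⊢; linear_combination (-(w 1 1)) * e4
    · -- degenerate: some pair is proportional
      right
      push_neg at hnd
      obtain ⟨i, j, hij, hz⟩ := hnd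
      have P01 : d2 w 0 1 = 0 → _ := fun h =>
        combine w hw 0 1 2 3 4 (by decide) (by decide) (by decide) (by decide) (by decide)
          (by decide) (by decide) (by decide) (by decide) (by decide) h
          (caseAD hAB5 e5 h (hw 1)) (caseAD hAB4 e4 h (hw 1)) (caseAD hAB3 E3 h (hw 1))
      have P02 : d2 w 0 2 = 0 → _ := fun h =>
        combine w hw 0 2 3 4 1 (by decide) (by decide) (by decide) (by decide) (by decide)
          (by decide) (by decide) (by decide) (by decide) (by decide) h
          (caseAD hAB2 E2 h (hw 2)) (caseAB hp0 e5 h (hw 2)) (caseAB hq0 e4 h (hw 2))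
      have P03 : d2 w 0 3 = 0 → _ := fun h =>
        combine w hw 0 3 4 2 1 (by decide) (by decide) (by decide) (by decide) (by decide)
          (by decide) (by decide) (by decide) (by decide) (by decide) h
          (caseAB hB2 E2 h (hw 3)) (caseAB hB3 E3 h (hw 3)) (caseAC hp1 e5 h (hw 3))
      have P04 : d2 w 0 4 = 0 → _ := fun h =>
        combine w hw 0 4 3 2 1 (by decide) (by decide) (by decide) (by decide) (by decide)
          (by decide) (by decide) (by decide) (by decide) (by decide) h
          (caseAC hA2 E2 h (hw 4)) (caseAC hA3 E3 h (hw 4)) (caseAC hq1 e4 h (hw 4))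
      have P12 : d2 w 1 2 = 0 → _ := fun h =>
        have h21 : d2 w 2 1 = 0 := dz_symm h
        have r4 : d2 w 1 0 = 0 ∨ d2 w 1 4 = 0 :=
          (caseDB hq1 e4 h (hw 1)).imp (fun hh => d2_trans (hw 2) h21 hh)
            (fun hh => d2_trans (hw 2) h21 hh)
        have r5 : d2 w 1 0 = 0 ∨ d2 w 1 3 = 0 :=
          (caseDB hp1 e5 h (hw 1)).imp (fun hh => d2_trans (hw 2) h21 hh)
            (fun hh => d2_trans (hw 2) h21 hh)
        combine w hw 1 2 3 4 0 (by decide) (by decide) (by decide) (by decide)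
          (by decide) (by decide) (by decide) (by decide) (by decide) (by decide) h
          (caseAD hAB1 E1 h (hw 2)) r5.symm r4.symm
      have P13 : d2 w 1 3 = 0 → _ := fun h =>
        have h31 : d2 w 3 1 = 0 := dz_symm h
        have r3 : d2 w 1 0 = 0 ∨ d2 w 1 4 = 0 :=
          (caseDB hA3 E3 h (hw 1)).imp (fun hh => d2_trans (hw 3) h31 hh)
            (fun hh => d2_trans (hw 3) h31 hh)
        have r5 : d2 w 1 0 = 0 ∨ d2 w 1 2 = 0 :=
          (caseCD hp0 e5 h31 (hw 1)).imp (fun hh => d2_trans (hw 3) h31 hh)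
            (fun hh => d2_trans (hw 3) h31 hh)
        combine w hw 1 3 4 2 0 (by decide) (by decide) (by decide) (by decide)
          (by decide) (by decide) (by decide) (by decide) (by decide) (by decide) h
          (caseAB hB1 E1 h (hw 3)) r3.symm r5.symm
      have P14 : d2 w 1 4 = 0 → _ := fun h =>
        have h41 : d2 w 4 1 = 0 := dz_symm h
        have r3 : d2 w 1 0 = 0 ∨ d2 w 1 3 = 0 :=
          (caseCD hB3 E3 h41 (hw 1)).imp (fun hh => d2_trans (hw 4) h41 hh)
            (fun hh => d2_trans (hw 4) h41 hh)
        have r4 : d2 w 1 0 = 0 ∨ d2 w 1 2 = 0 :=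
          (caseCD hq0 e4 h41 (hw 1)).imp (fun hh => d2_trans (hw 4) h41 hh)
            (fun hh => d2_trans (hw 4) h41 hh)
        combine w hw 1 4 3 2 0 (by decide) (by decide) (by decide) (by decide)
          (by decide) (by decide) (by decide) (by decide) (by decide) (by decide) h
          (caseAC hA1 E1 h (hw 4)) r3.symm r4.symm
      have P23 : d2 w 2 3 = 0 → _ := fun h =>
        have h32 : d2 w 3 2 = 0 := dz_symm h
        have r1 : d2 w 2 1 = 0 ∨ d2 w 2 4 = 0 :=
          (caseDB hA1 E1 h (hw 2)).imp (fun hh => d2_trans (hw 3) h32 hh)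
            (fun hh => d2_trans (hw 3) h32 hh)
        have r2 : d2 w 2 0 = 0 ∨ d2 w 2 4 = 0 :=
          (caseDB hA2 E2 h (hw 2)).imp (fun hh => d2_trans (hw 3) h32 hh)
            (fun hh => d2_trans (hw 3) h32 hh)
        have r5 : d2 w 2 0 = 0 ∨ d2 w 2 1 = 0 := caseBC hAB5 e5 h (hw 3)
        combine w hw 2 3 1 4 0 (by decide) (by decide) (by decide) (by decide)
          (by decide) (by decide) (by decide) (by decide) (by decide) (by decide) h
          r1 r5.symm r2.symm
      have P24 : d2 w 2 4 = 0 → _ := fun h =>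
        have h42 : d2 w 4 2 = 0 := dz_symm h
        have r1 : d2 w 2 1 = 0 ∨ d2 w 2 3 = 0 :=
          (caseCD hB1 E1 h42 (hw 2)).imp (fun hh => d2_trans (hw 4) h42 hh)
            (fun hh => d2_trans (hw 4) h42 hh)
        have r2 : d2 w 2 0 = 0 ∨ d2 w 2 3 = 0 :=
          (caseCD hB2 E2 h42 (hw 2)).imp (fun hh => d2_trans (hw 4) h42 hh)
            (fun hh => d2_trans (hw 4) h42 hh)
        have r4 : d2 w 2 0 = 0 ∨ d2 w 2 1 = 0 := caseBC hAB4 e4 h (hw 4)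
        combine w hw 2 4 1 3 0 (by decide) (by decide) (by decide) (by decide)
          (by decide) (by decide) (by decide) (by decide) (by decide) (by decide) h
          r1 r4.symm r2.symm
      have P34 : d2 w 3 4 = 0 → _ := fun h =>
        have r1 : d2 w 3 1 = 0 ∨ d2 w 3 2 = 0 := caseBC hAB1 E1 h (hw 4)
        have r2 : d2 w 3 0 = 0 ∨ d2 w 3 2 = 0 := caseBC hAB2 E2 h (hw 4)
        have r3 : d2 w 3 0 = 0 ∨ d2 w 3 1 = 0 := caseBC hAB3 E3 h (hw 4)
        combine w hw 3 4 1 2 0 (by decide) (by decide) (by decide) (by decide)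
          (by decide) (by decide) (by decide) (by decide) (by decide) (by decide) h
          r1 r3.symm r2.symm
      fin_cases i <;> fin_cases j <;>
        first
          | exact absurd rfl hij
          | exact P01 hz | exact P01 (dz_symm hz)
          | exact P02 hz | exact P02 (dz_symm hz)
          | exact P03 hz | exact P03 (dz_symm hz)
          | exact P04 hz | exact P04 (dz_symm hz)
          | exact P12 hz | exact P12 (dz_symm hz)
          | exact P13 hz | exact P13 (dz_symm hz)
          | exact P14 hz | exact P14 (dz_symm hz)
          | exact P23 hz | exact P23 (dz_symm hz)
          | exact P24 hz | exact P24 (dz_symm hz)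
          | exact P34 hz | exact P34 (dz_symm hz)
  · rintro (⟨g, c₀, c₁, c₂, c₃, c₄, hc0, hc1, hc2, hc3, hc4, h0, h1, h2, h3, h4⟩ |
      ⟨i, j, k, l, hij, hik, hil, hjk, hjl, hkl, hzero⟩)
    · have hb : (![1, 1] : Fin 2 → K) = ![1, 0] + ![0, 1] := by
        funext t; fin_cases t <;> simp
      have hbp : (![p₀, p₁] : Fin 2 → K) = p₀ • ![1, 0] + p₁ • ![0, 1] := by
        funext t; fin_cases t <;> simp
      have hbq : (![q₀, q₁] : Fin 2 → K) = q₀ • ![1, 0] + q₁ • ![0, 1] := by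
        funext t; fin_cases t <;> simp
      rw [hb, map_add] at h2
      rw [hbp, map_add, map_smul, map_smul] at h3
      rw [hbq, map_add, map_smul, map_smul] at h4
      refine ⟨?_, ?_, ?_, ?_, ?_⟩ <;>
        · simp only [d2, h0, h1, h2, h3, h4, Pi.smul_apply, Pi.add_apply, smul_eq_mul]
          ring
    · have hcard : ({i, j, k, l} : Finset (Fin 5)).card = 4 := by
        rw [Finset.card_insert_of_notMem (by simp [hij, hik, hil]),
          Finset.card_insert_of_notMem (by simp [hjk, hjl]),
          Finset.card_insert_of_notMem (by simp [hkl]), Finset.card_singleton]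
      have huniq : ∀ x y : Fin 5, x ∉ ({i, j, k, l} : Finset (Fin 5)) →
          y ∉ ({i, j, k, l} : Finset (Fin 5)) → x = y := by
        intro x y hx hy
        have hcc : ({i, j, k, l} : Finset (Fin 5))ᶜ.card = 1 := by
          rw [Finset.card_compl, hcard]; rfl
        exact Finset.card_le_one.mp hcc.le x (Finset.mem_compl.mpr hx) y
          (Finset.mem_compl.mpr hy)
      have key : ∀ a b c e : Fin 5, a ≠ b → c ≠ e → a ≠ c → a ≠ e → b ≠ c → b ≠ e →
          d2 w a b * d2 w c e = 0 := by
        intro a b c e hab hce hac hae hbc hbe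
        by_cases ha : a ∈ ({i, j, k, l} : Finset (Fin 5))
        · by_cases hb : b ∈ ({i, j, k, l} : Finset (Fin 5))
          · rw [hzero a b ha hb hab, zero_mul]
          · have hc : c ∈ ({i, j, k, l} : Finset (Fin 5)) := by
              by_contra hc; exact hbc (huniq b c hb hc)
            have he : e ∈ ({i, j, k, l} : Finset (Fin 5)) := by
              by_contra he; exact hbe (huniq b e hb he)
            rw [hzero c e hc he hce, mul_zero]
        · have hc : c ∈ ({i, j, k, l} : Finset (Fin 5)) := by
            by_contra hc; exact hac (huniq a c ha hc)
          have he : e ∈ ({i, j, k, l} : Finset (Fin 5)) := by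
            by_contra he; exact hae (huniq a e ha he)
          rw [hzero c e hc he hce, mul_zero]
      refine ⟨?_, ?_, ?_, ?_, ?_⟩
      · linear_combination (q₀ * (p₁ - p₀)) * key 1 3 4 2 (by decide) (by decide) (by decide)
          (by decide) (by decide) (by decide) + (p₀ * (q₁ - q₀)) * key 1 4 2 3 (by decide)
          (by decide) (by decide) (by decide) (by decide) (by decide)
      · linear_combination (q₁ * (p₁ - p₀)) * key 0 3 4 2 (by decide) (by decide) (by decide)
          (by decide) (by decide) (by decide) + (p₁ * (q₁ - q₀)) * key 0 4 2 3 (by decide)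
          (by decide) (by decide) (by decide) (by decide) (by decide)
      · linear_combination (p₀ * q₁) * key 0 3 4 1 (by decide) (by decide) (by decide)
          (by decide) (by decide) (by decide) + (p₁ * q₀) * key 0 4 1 3 (by decide)
          (by decide) (by decide) (by decide) (by decide) (by decide)
      · linear_combination q₁ * key 0 2 4 1 (by decide) (by decide) (by decide)
          (by decide) (by decide) (by decide) + q₀ * key 0 4 1 2 (by decide)
          (by decide) (by decide) (by decide) (by decide) (by decide)
      · linear_combination p₁ * key 0 2 3 1 (by decide) (by decide) (by decide)
          (by decide) (by decide) (by decide) + p₀ * key 0 3 1 2 (by decide)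
          (by decide) (by decide) (by decide) (by decide) (by decide)
end
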